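/- arXiv:2101.09506 — 2 statements merged into one kernel-verified Lean document; each statement's English description precedes it below -/
import Mathlib

section
/- The algebra Ĥ is generated by â₀ and â₁: the smallest subspace of Ĥ containing â₀ and â₁ and closed under the product equals all of Ĥ. -/
namespace HatAlgebra

/-- Basis of the algebra `Ĥ`: vectors `â i` for `i : ℤ`, `ŝ_{0̄,j}` for `j` a positive
integer, and `ŝ_{1̄,3k}`, `ŝ_{2̄,3k}` for `k` a positive integer. -/
inductive HatB : Type
  | a : ℤ → HatB
  | s0 : ℕ+ → HatB
  | s1 : ℕ+ → HatB
  | s2 : ℕ+ → HatB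
  deriving DecidableEq

variable (F : Type*) [Field F]

/-- The underlying vector space of `Ĥ`: the free `F`-vector space on `HatB`. -/
abbrev HatH : Type _ := HatB →₀ F

/-- The basis vector `â i`. -/
noncomputable def aHat (i : ℤ) : HatH F := Finsupp.single (HatB.a i) 1

/-- The element `ŝ_{r̄,j}` of `Ĥ`, with the conventions `ŝ_{r̄,0} = 0` and
`ŝ_{1̄,j} = ŝ_{0̄,j} = ŝ_{2̄,j}` whenever `3 ∤ j`. -/
noncomputable def sHat (r : ZMod 3) (j : ℕ) : HatH F :=
  if h : j = 0 then 0
  else if h3 : 3 ∣ j then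
    if r = 0 then Finsupp.single (HatB.s0 ⟨j, Nat.pos_of_ne_zero h⟩) 1
    else if r = 1 then
      Finsupp.single (HatB.s1 ⟨j / 3,
        Nat.div_pos (Nat.le_of_dvd (Nat.pos_of_ne_zero h) h3) (by norm_num)⟩) 1
    else
      Finsupp.single (HatB.s2 ⟨j / 3,
        Nat.div_pos (Nat.le_of_dvd (Nat.pos_of_ne_zero h) h3) (by norm_num)⟩) 1
  else Finsupp.single (HatB.s0 ⟨j, Nat.pos_of_ne_zero h⟩) 1

/-- The operation `∗`: `(−1) ∗ 1̄ = −1`, `(−1) ∗ 2̄ = 1`, `0 ∗ t̄ = 0`. -/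
def hatStar (x : ℤ) (t : ZMod 3) : ℤ :=
  if x = 0 then 0 else if t = 1 then -1 else if t = 2 then 1 else 0

/-- The coefficient `(δ_{ī,r̄} − 1) ∗ (ī − r̄)` appearing in rule (Ĥ2). -/
def hatC (i r : ZMod 3) : ℤ := hatStar ((if i = r then 1 else 0) - 1) (i - r)

/-- Rule (Ĥ2): the product `â_i · ŝ_{r̄,j}`. -/
noncomputable def aMulS (i : ℤ) (r : ZMod 3) (j : ℕ) : HatH F :=
  (-2 : F) • aHat F i + (aHat F (i - (j : ℤ)) + aHat F (i + (j : ℤ))) - sHat F r j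
    - (hatC (i : ZMod 3) r : F) • (sHat F (r - 1) j - sHat F (r + 1) j)

/-- `ŝ_{0̄,n} + ŝ_{1̄,n} + ŝ_{2̄,n}`. -/
noncomputable def sSum (n : ℕ) : HatH F := sHat F 0 n + sHat F 1 n + sHat F 2 n

/-- For `r ≠ t` in `ℤ/3ℤ`, the signed sum `ŝ_{r̄,n} + ŝ_{t̄,n} − ŝ_{m̄,n}` where `m̄`
is the third residue class (appearing in rules (Ĥ5), (Ĥ6), (Ĥ7)). -/
noncomputable def sT (r t : ZMod 3) (n : ℕ) : HatH F :=
  sHat F r n + sHat F t n - sHat F (-(r + t)) n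

/-- Rules (Ĥ3)–(Ĥ7): the product `ŝ_{r̄,i} · ŝ_{t̄,j}`. -/
noncomputable def sMulS (r : ZMod 3) (i : ℕ) (t : ZMod 3) (j : ℕ) : HatH F :=
  if 3 ∣ i ∧ 3 ∣ j then
    if r = t then
      (2 : F) • (sHat F r i + sHat F r j) - (sHat F r (Nat.dist i j) + sHat F r (i + j))
    else
      (2 : F) • (sT F r t i + sT F r t j) - (sT F r t (Nat.dist i j) + sT F r t (i + j))
  else
    (2 : F) • (sHat F r i + sHat F t j) - (2 : F) • (sSum F (Nat.dist i j) + sSum F (i + j))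

/-- The product of `Ĥ` on basis vectors, given by rules (Ĥ1)–(Ĥ7) (extended
symmetrically, since the product is commutative). -/
noncomputable def mulB : HatB → HatB → HatH F
  | .a i, .a j => (-2 : F) • (aHat F i + aHat F j) + sHat F (i : ZMod 3) (i - j).natAbs
  | .a i, .s0 j => aMulS F i 0 (j : ℕ)
  | .s0 j, .a i => aMulS F i 0 (j : ℕ)
  | .a i, .s1 k => aMulS F i 1 (3 * (k : ℕ))
  | .s1 k, .a i => aMulS F i 1 (3 * (k : ℕ))
  | .a i, .s2 k => aMulS F i 2 (3 * (k : ℕ))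
  | .s2 k, .a i => aMulS F i 2 (3 * (k : ℕ))
  | .s0 i, .s0 j => sMulS F 0 (i : ℕ) 0 (j : ℕ)
  | .s0 i, .s1 k => sMulS F 0 (i : ℕ) 1 (3 * (k : ℕ))
  | .s1 k, .s0 i => sMulS F 0 (i : ℕ) 1 (3 * (k : ℕ))
  | .s0 i, .s2 k => sMulS F 0 (i : ℕ) 2 (3 * (k : ℕ))
  | .s2 k, .s0 i => sMulS F 0 (i : ℕ) 2 (3 * (k : ℕ))
  | .s1 h, .s1 k => sMulS F 1 (3 * (h : ℕ)) 1 (3 * (k : ℕ))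
  | .s1 h, .s2 k => sMulS F 1 (3 * (h : ℕ)) 2 (3 * (k : ℕ))
  | .s2 k, .s1 h => sMulS F 1 (3 * (h : ℕ)) 2 (3 * (k : ℕ))
  | .s2 h, .s2 k => sMulS F 2 (3 * (h : ℕ)) 2 (3 * (k : ℕ))

/-- The commutative bilinear product of `Ĥ`, as a bilinear map. -/
noncomputable def hatMul : HatH F →ₗ[F] HatH F →ₗ[F] HatH F :=
  Finsupp.lift (HatH F →ₗ[F] HatH F) F HatB fun x => Finsupp.lift (HatH F) F HatB (mulB F x)

/-- The product of two elements of `Ĥ`. -/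
noncomputable def hmul (x y : HatH F) : HatH F := hatMul F x y


lemma hmul_single (b b' : HatB) :
    hmul F (Finsupp.single b 1) (Finsupp.single b' 1) = mulB F b b' := by
  simp [hmul, hatMul]

lemma sHat_one (r : ZMod 3) : sHat F r 1 = Finsupp.single (HatB.s0 1) 1 := by
  simp [sHat]

lemma sHat_s0 (j : ℕ+) : sHat F 0 (j : ℕ) = Finsupp.single (HatB.s0 j) 1 := by
  obtain ⟨j, hj⟩ := j
  simp [sHat, hj.ne']

lemma sHat_s1 (k : ℕ+) : sHat F 1 (3 * (k : ℕ)) = Finsupp.single (HatB.s1 k) 1 := by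
  obtain ⟨k, hk⟩ := k
  simp [sHat, hk.ne', Nat.mul_div_cancel_left _ (by norm_num : 0 < 3)]

lemma sHat_s2 (k : ℕ+) : sHat F 2 (3 * (k : ℕ)) = Finsupp.single (HatB.s2 k) 1 := by
  obtain ⟨k, hk⟩ := k
  simp [sHat, hk.ne', Nat.mul_div_cancel_left _ (by norm_num : 0 < 3),
    (by decide : (2:ZMod 3) ≠ 0), (by decide : (2:ZMod 3) ≠ 1)]


lemma key_mul (j : ℤ) : hmul F (aHat F j) (sHat F 0 1) =
    (-2:F) • aHat F j + (aHat F (j-1) + aHat F (j+1)) - sHat F 0 1 := by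
  rw [aHat, sHat_one, hmul_single]
  show aMulS F j 0 ((1:ℕ+):ℕ) = _
  simp [aMulS, sHat_one, aHat, Finsupp.smul_single]

/-- `Ĥ` is generated by `â₀` and `â₁`: every subspace containing `â₀`, `â₁` and
closed under the product is all of `Ĥ` (equivalently, the smallest such subspace
is `Ĥ`). -/
theorem generated_by_a0_a1 [CharP F 5] (p : Submodule F (HatH F))
    (h0 : aHat F 0 ∈ p) (h1 : aHat F 1 ∈ p)
    (hclosed : ∀ x ∈ p, ∀ y ∈ p, hmul F x y ∈ p) : p = ⊤ := by
  have hs1 : sHat F 0 1 ∈ p := by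
    have h : mulB F (.a 0) (.a 1) ∈ p := by
      simpa [aHat, hmul_single] using hclosed _ h0 _ h1
    have e : sHat F 0 1 = mulB F (.a 0) (.a 1) + (2:F) • (aHat F 0 + aHat F 1) := by
      simp [mulB]
      module
    rw [e]
    exact p.add_mem h (p.smul_mem _ (p.add_mem h0 h1))
  have step_up : ∀ j : ℤ, aHat F (j-1) ∈ p → aHat F j ∈ p → aHat F (j+1) ∈ p := by
    intro j hm h
    have e : aHat F (j+1) = hmul F (aHat F j) (sHat F 0 1) + (2:F) • aHat F j
        - aHat F (j-1) + sHat F 0 1 := by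
      rw [key_mul]; module
    rw [e]
    exact p.add_mem (p.sub_mem (p.add_mem (hclosed _ h _ hs1) (p.smul_mem _ h)) hm) hs1
  have step_down : ∀ j : ℤ, aHat F j ∈ p → aHat F (j+1) ∈ p → aHat F (j-1) ∈ p := by
    intro j h hp
    have e : aHat F (j-1) = hmul F (aHat F j) (sHat F 0 1) + (2:F) • aHat F j
        - aHat F (j+1) + sHat F 0 1 := by
      rw [key_mul]; module
    rw [e]
    exact p.add_mem (p.sub_mem (p.add_mem (hclosed _ h _ hs1) (p.smul_mem _ h)) hp) hs1
  have ha : ∀ i : ℤ, aHat F i ∈ p := by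
    have key : ∀ i : ℤ, aHat F i ∈ p ∧ aHat F (i+1) ∈ p := by
      intro i
      induction i using Int.induction_on with
      | zero => exact ⟨h0, by norm_num; exact h1⟩
      | succ k ih => exact ⟨ih.2, step_up (k+1) (by simpa using ih.1) ih.2⟩
      | pred k ih =>
        have hd := step_down (-k) ih.1 (by simpa using ih.2)
        exact ⟨hd, by rw [show (-(k:ℤ)-1+1) = -k by ring]; exact ih.1⟩
    exact fun i => (key i).1
  have hsmem : ∀ (r : ZMod 3) (z : ℤ) (n : ℕ), ((z : ZMod 3) = r) → sHat F r n ∈ p := by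
    intro r z n hz
    rcases eq_or_ne n 0 with rfl|hn
    · simp [sHat]
    · have h : mulB F (.a z) (.a (z - n)) ∈ p := by
        simpa [aHat, hmul_single] using hclosed _ (ha z) _ (ha (z - n))
      have hnat : (z - (z - (n:ℤ))).natAbs = n := by omega
      have e : sHat F r n = mulB F (.a z) (.a (z - (n:ℤ)))
          + (2:F) • (aHat F z + aHat F (z - (n:ℤ))) := by
        simp [mulB, hnat, hz]
        module
      rw [e]
      exact p.add_mem h (p.smul_mem _ (p.add_mem (ha z) (ha _)))
  have hsingle : ∀ b : HatB, Finsupp.single b 1 ∈ p := by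
    intro b
    cases b with
    | a i => exact ha i
    | s0 j => rw [← sHat_s0]; exact hsmem 0 0 _ (by simp)
    | s1 k => rw [← sHat_s1]; exact hsmem 1 1 _ (by simp)
    | s2 k => rw [← sHat_s2]; exact hsmem 2 2 _ (by push_cast; ring)
  rw [eq_top_iff]
  intro x _
  induction x using Finsupp.induction with
  | zero => exact p.zero_mem
  | single_add b c f _ _ ih =>
    refine p.add_mem ?_ (ih trivial)
    rw [show Finsupp.single b c = c • Finsupp.single b 1 by
      rw [Finsupp.smul_single, smul_eq_mul, mul_one]]
    exact p.smul_mem _ (hsingle b)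


end HatAlgebra
end

section
/- For all i, j ∈ ℤ₊, in Ĥ one has û_i · v̂_j = v̂_{i,j}. -/
namespace HatAlgebra

variable (F : Type*) [Field F]

/-- `û_i := −2â₀ + (â_i + â_{−i}) + 2ŝ_{0̄,i}`. -/
noncomputable def uHat (i : ℕ) : HatH F :=
  (-2 : F) • aHat F 0 + (aHat F (i : ℤ) + aHat F (-(i : ℤ))) + (2 : F) • sHat F 0 i

/-- `v̂_i := −2â₀ + (â_i + â_{−i}) − ŝ_{0̄,i}`. -/
noncomputable def vHat (i : ℕ) : HatH F :=
  (-2 : F) • aHat F 0 + (aHat F (i : ℤ) + aHat F (-(i : ℤ))) - sHat F 0 i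

/-- `v̂_{i,j} := −2v̂_i − 2v̂_j + v̂_{|i−j|} + v̂_{i+j}`. -/
noncomputable def vij (i j : ℕ) : HatH F :=
  (-2 : F) • vHat F i + (-2 : F) • vHat F j + vHat F (Nat.dist i j) + vHat F (i + j)


lemma sHat_zero (r : ZMod 3) : sHat F r 0 = 0 := by simp [sHat]

lemma sHat_ne (r : ZMod 3) (n : ℕ) (h : ¬ 3 ∣ n) : sHat F r n = sHat F 0 n := by
  unfold sHat
  split <;> first | rfl | (rw [dif_neg h, dif_neg h])

lemma sHat_s0_s9 (n : ℕ) (h : n ≠ 0) :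
    sHat F 0 n = Finsupp.single (HatB.s0 ⟨n, Nat.pos_of_ne_zero h⟩) 1 := by
  unfold sHat
  rw [dif_neg h]
  split
  · rw [if_pos rfl]
  · rfl

lemma hmul_single_s9 (x y : HatB) (c d : F) :
    hmul F (Finsupp.single x c) (Finsupp.single y d) = (c * d) • mulB F x y := by
  simp [hmul, hatMul, Finsupp.lift_apply, Finsupp.sum_single_index, mul_smul]

lemma hmul_aa (x y : ℤ) :
    hmul F (aHat F x) (aHat F y)
      = (-2 : F) • (aHat F x + aHat F y) + sHat F (x : ZMod 3) (x - y).natAbs := by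
  rw [aHat, aHat, hmul_single_s9, one_mul, one_smul]; rfl

lemma hmul_as (x : ℤ) (n : ℕ) (h : n ≠ 0) :
    hmul F (aHat F x) (sHat F 0 n) = aMulS F x 0 n := by
  rw [aHat, sHat_s0_s9 F n h, hmul_single_s9, one_mul, one_smul]; rfl

lemma hmul_sa (x : ℤ) (n : ℕ) (h : n ≠ 0) :
    hmul F (sHat F 0 n) (aHat F x) = aMulS F x 0 n := by
  rw [aHat, sHat_s0_s9 F n h, hmul_single_s9, one_mul, one_smul]; rfl

lemma hmul_ss (m n : ℕ) (hm : m ≠ 0) (hn : n ≠ 0) :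
    hmul F (sHat F 0 m) (sHat F 0 n) = sMulS F 0 m 0 n := by
  rw [sHat_s0_s9 F m hm, sHat_s0_s9 F n hn, hmul_single_s9, one_mul, one_smul]; rfl

lemma hmul_addl (x y z : HatH F) : hmul F (x + y) z = hmul F x z + hmul F y z := by
  simp [hmul]
lemma hmul_addr (x y z : HatH F) : hmul F x (y + z) = hmul F x y + hmul F x z := by
  simp [hmul]
lemma hmul_subl (x y z : HatH F) : hmul F (x - y) z = hmul F x z - hmul F y z := by
  simp [hmul]
lemma hmul_subr (x y z : HatH F) : hmul F x (y - z) = hmul F x y - hmul F x z := by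
  simp [hmul]
lemma hmul_smull (c : F) (x z : HatH F) : hmul F (c • x) z = c • hmul F x z := by
  simp [hmul]
lemma hmul_smulr (c : F) (x z : HatH F) : hmul F x (c • z) = c • hmul F x z := by
  simp [hmul]

set_option maxHeartbeats 2000000 in
/-- For all `i, j ∈ ℤ₊`, `û_i · v̂_j = v̂_{i,j}`. -/
theorem uHat_mul_vHat [CharP F 5] (i j : ℕ) (hi : 0 < i) (hj : 0 < j) :
    hmul F (uHat F i) (vHat F j) = vij F i j := by
  have hi' : i ≠ 0 := hi.ne'
  have hj' : j ≠ 0 := hj.ne'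
  have h5 : (5 : F) = 0 := by exact_mod_cast CharP.cast_eq_zero F 5
  have e1 : ((i : ℤ) - (j : ℤ)).natAbs = Nat.dist i j := by unfold Nat.dist; omega
  have e2 : ((-(i : ℤ)) - (j : ℤ)).natAbs = i + j := by omega
  have e3 : ((i : ℤ) - -(j : ℤ)).natAbs = i + j := by omega
  have e4 : ((-(i : ℤ)) - -(j : ℤ)).natAbs = Nat.dist i j := by unfold Nat.dist; omega
  have e5 : ((0 : ℤ) - (j : ℤ)).natAbs = j := by omega
  have e6 : ((0 : ℤ) - -(j : ℤ)).natAbs = j := by omega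
  have e7 : ((i : ℤ) - 0).natAbs = i := by omega
  have e8 : ((-(i : ℤ)) - 0).natAbs = i := by omega
  have e9 : ((0 : ℤ) - (0 : ℤ)).natAbs = 0 := by omega
  have hzi : ((i : ℕ) : ZMod 3) = ((i % 3 : ℕ) : ZMod 3) := (ZMod.natCast_mod i 3).symm
  have hzj : ((j : ℕ) : ZMod 3) = ((j % 3 : ℕ) : ZMod 3) := (ZMod.natCast_mod j 3).symm
  have c00 : hatC 0 0 = 0 := by decide
  have c10 : hatC 1 0 = -1 := by decide
  have c20 : hatC 2 0 = 1 := by decide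
  have cn0 : hatC (-0) 0 = 0 := by decide
  have cn1 : hatC (-1) 0 = 1 := by decide
  have cn2 : hatC (-2) 0 = -1 := by decide
  have z1 : ((0 : ZMod 3) - 1) = 2 := by decide
  have zn1 : ((-1 : ZMod 3)) = 2 := by decide
  have zn2 : ((-2 : ZMod 3)) = 1 := by decide
  have z2 : ((0 : ZMod 3) + 1) = 1 := by decide
  rw [uHat, vHat]
  simp only [hmul_addl, hmul_addr, hmul_subl, hmul_subr, hmul_smull, hmul_smulr]
  simp only [hmul_aa, hmul_as, hmul_sa, hmul_ss, hi', hj', ne_eq, not_false_iff]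
  have hmi : i % 3 = 0 ∨ i % 3 = 1 ∨ i % 3 = 2 := by omega
  have hmj : j % 3 = 0 ∨ j % 3 = 1 ∨ j % 3 = 2 := by omega
  rcases Nat.le_total i j with hle | hle <;>
  rcases hmi with hmi | hmi | hmi <;> rcases hmj with hmj | hmj | hmj <;>
  
  · first
      | have hdi : 3 ∣ i := by omega
      | have hdi : ¬ 3 ∣ i := by omega
    first
      | have hdj : 3 ∣ j := by omega
      | have hdj : ¬ 3 ∣ j := by omega
    first
      | have hdd : 3 ∣ Nat.dist i j := by unfold Nat.dist; omega
      | have hdd : ¬ 3 ∣ Nat.dist i j := by unfold Nat.dist; omega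
    first
      | have hds : 3 ∣ (i + j) := by omega
      | have hds : ¬ 3 ∣ (i + j) := by omega
    first
      | have hcast : ((Nat.dist i j : ℕ) : ℤ) = (j : ℤ) - (i : ℤ) := by
          unfold Nat.dist; omega
      | have hcast : ((Nat.dist i j : ℕ) : ℤ) = (i : ℤ) - (j : ℤ) := by
          unfold Nat.dist; omega
    simp only [vij, vHat, aMulS, sMulS, sSum, e1, e2, e3, e4, e5, e6, e7, e8, e9,
      Int.cast_zero, Int.cast_natCast, Int.cast_neg, hzi, hzj, hmi, hmj,
      Nat.cast_zero, Nat.cast_one, Nat.cast_ofNat, Nat.cast_add, neg_zero,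
      sHat_zero, hdi, hdj, hdd, hds, hcast,
      c00, c10, c20, cn0, cn1, cn2, z1, z2, zn1, zn2,
      sHat_ne, and_self, if_true, if_false, ite_true, ite_false, not_false_iff,
      Int.cast_one, Int.cast_neg, Int.cast_zero, dvd_refl, and_true, true_and, false_and,
      and_false, if_neg, not_true]
    ring_nf
    match_scalars <;>
    first
      | ring1
      | linear_combination h5
      | linear_combination -h5
      | linear_combination 2 * h5
      | linear_combination -2 * h5
      | linear_combination 3 * h5
      | linear_combination -3 * h5
      | linear_combination 4 * h5
      | linear_combination -4 * h5

end HatAlgebra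
end
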